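/- Let α be a real algebraic number of degree d that is not an algebraic integer, and suppose x = a/b is a positive rational in lowest terms (gcd(a,b)=1, b ≥ 1) with x^x = α. Then b ≥ 2 and b / log b ≤ d / log 2. -/

import Mathlib

open Polynomial

theorem stmt_5 (α : ℝ) (d : ℕ) (halg : IsAlgebraic ℚ α) (hd : (minpoly ℚ α).natDegree = d)
    (hnotint : ¬ IsIntegral ℤ α) (a b : ℕ) (ha : 0 < a) (hb : 0 < b)
    (hab : Nat.Coprime a b)
    (h : ((a : ℝ) / b) ^ ((a : ℝ) / b) = α) :
    2 ≤ b ∧ (b : ℝ) / Real.log b ≤ (d : ℝ) / Real.log 2 := by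
  -- b ≥ 2
  have hb2 : 2 ≤ b := by
    by_contra hlt
    have hb1 : b = 1 := by omega
    subst hb1
    apply hnotint
    have : α = ((a ^ a : ℕ) : ℝ) := by
      rw [← h]
      push_cast
      rw [div_one, ← Real.rpow_natCast (a:ℝ) a]
    rw [this]
    have : ((a ^ a : ℕ) : ℝ) = algebraMap ℤ ℝ (a^a : ℕ) := by push_cast; ring
    rw [this]
    exact isIntegral_algebraMap
  -- positivity
  have hxpos : (0:ℝ) < (a:ℝ)/b := by positivity
  have hα : 0 < α := h ▸ Real.rpow_pos_of_pos hxpos _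
  -- r = α^b as a rational
  set r : ℚ := (a:ℚ)^a / (b:ℚ)^a with hr_def
  have hrpos : 0 < r := by positivity
  have hrb : α ^ b = (r : ℝ) := by
    rw [← h, ← Real.rpow_natCast (((a:ℝ)/b) ^ ((a:ℝ)/b)) b, ← Real.rpow_mul hxpos.le]
    have : (a:ℝ)/b * b = (a:ℕ) := by
      field_simp
    rw [this, Real.rpow_natCast]
    rw [hr_def]
    push_cast
    rw [div_pow]
  have hint : IsIntegral ℚ α := halg.isIntegral
  have hdpos : 0 < d := hd ▸ minpoly.natDegree_pos hint
  have hdvd : minpoly ℚ α ∣ (X ^ b - C r) := by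
    apply minpoly.dvd
    rw [map_sub, map_pow, aeval_X, aeval_C, hrb]
    simp
  have hαd : ∃ q : ℚ, α ^ d = (q : ℝ) := by
    refine ⟨|((minpoly ℚ α).coeff 0)|, ?_⟩
    set P := minpoly ℚ α with hP
    set Q := P.map (algebraMap ℚ ℂ) with hQ
    have hPm : P.Monic := minpoly.monic hint
    have hQm : Q.Monic := hPm.map _
    have hQd : Q.natDegree = d := by rw [hQ, hPm.natDegree_map]; exact hd
    have hsp : Q.Splits := IsAlgClosed.splits Q
    have hcard : Multiset.card Q.roots = d := by
      rw [← hQd]; exact Polynomial.splits_iff_card_roots.mp hsp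
    have hprod : Q.coeff 0 = (-1)^d * Q.roots.prod := by
      have := hsp.coeff_zero_eq_prod_roots_of_monic hQm
      rwa [hQd] at this
    have habs : ∀ z ∈ Q.roots, ‖z‖ = α := by
      intro z hz
      have hzr : Q.IsRoot z := (Polynomial.mem_roots hQm.ne_zero).mp hz
      have hroot : z ^ b = ((r:ℚ):ℂ) := by
        obtain ⟨g, hg⟩ := Polynomial.map_dvd (algebraMap ℚ ℂ) hdvd
        have hmap : ((X:ℚ[X]) ^ b - C r).map (algebraMap ℚ ℂ) = X ^ b - C ((r:ℚ):ℂ) := by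
          simp [Polynomial.map_sub, Polynomial.map_pow]
        rw [hmap] at hg
        have h2 := congrArg (Polynomial.eval z) hg
        simp [(show aeval z P = 0 by rw [← Polynomial.eval_map_algebraMap]; exact hzr.eq_zero)] at h2
        exact sub_eq_zero.mp h2
      have habs1 : ‖z‖ ^ b = α ^ b := by
        rw [← norm_pow, hroot, hrb,
          show ((r:ℚ):ℂ) = (((r:ℚ):ℝ):ℂ) by push_cast; rfl,
          Complex.norm_real, Real.norm_eq_abs, abs_of_pos (by exact_mod_cast hrpos)]
      exact (pow_left_strictMonoOn₀ hb.ne').injOn (norm_nonneg z) hα.le habs1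
    have hmapc : Q.roots.map (‖·‖) = Multiset.replicate (Multiset.card Q.roots) α := by
      rw [Multiset.eq_replicate]
      refine ⟨by simp, ?_⟩
      intro x hx
      obtain ⟨z, hz, rfl⟩ := Multiset.mem_map.mp hx
      exact habs z hz
    have hprodabs : ‖Q.roots.prod‖ = α ^ d := by
      rw [show ‖Q.roots.prod‖ = (Q.roots.map (‖·‖)).prod from map_multiset_prod (normHom : ℂ →*₀ ℝ) _, hmapc, Multiset.prod_replicate, hcard]
    have hfin : ‖Q.coeff 0‖ = α ^ d := by
      rw [hprod, norm_mul, norm_pow]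
      simp [hprodabs]
    rw [← hfin, hQ, Polynomial.coeff_map,
      show (algebraMap ℚ ℂ) (P.coeff 0) = (((P.coeff 0 : ℚ):ℝ):ℂ) by push_cast; rfl,
      Complex.norm_real, Real.norm_eq_abs]
    push_cast
    rfl
  -- n minimal with α ^ n rational
  classical
  have hex : ∃ k, 0 < k ∧ ∃ q : ℚ, α ^ k = (q:ℝ) := ⟨b, hb, r, hrb⟩
  set n := Nat.find hex with hn
  obtain ⟨hnpos, s, hs⟩ := Nat.find_spec hex
  have hnd : n ≤ d := Nat.find_min' hex ⟨hdpos, hαd⟩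
  have hndvd : n ∣ b := by
    by_contra hcon
    have hk : 0 < b % n := Nat.pos_of_ne_zero (fun h0 => hcon (Nat.dvd_of_mod_eq_zero h0))
    have hklt : b % n < n := Nat.mod_lt _ hnpos
    apply Nat.find_min hex hklt
    refine ⟨hk, r / s ^ (b / n), ?_⟩
    push_cast
    rw [← hs, ← hrb, eq_div_iff (by positivity), ← pow_mul, ← pow_add]
    congr 1
    exact Nat.mod_add_div b n
  set m := b / n with hm
  have hnm : n * m = b := Nat.mul_div_cancel' hndvd
  have hmpos : 0 < m := Nat.pos_of_ne_zero (fun h0 => by rw [h0, Nat.mul_zero] at hnm; omega)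
  have hsm : s ^ m = r := by
    have : ((s ^ m : ℚ) : ℝ) = (r : ℝ) := by
      push_cast
      rw [← hs, ← pow_mul, hnm, hrb]
    exact_mod_cast this
  have hspos : 0 < s := by
    have : (0:ℝ) < (s:ℝ) := by rw [← hs]; positivity
    exact_mod_cast this
  -- prime p dividing b
  set p := b.minFac with hp
  have pp : p.Prime := Nat.minFac_prime (by omega)
  haveI : Fact p.Prime := ⟨pp⟩
  have hpb : p ∣ b := Nat.minFac_dvd b
  set v := b.factorization p with hv
  have hv1 : 1 ≤ v := (pp.factorization_pos_of_dvd (by omega) hpb)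
  have hpa : ¬ p ∣ a := by
    intro hpa
    have h1 : p ∣ Nat.gcd a b := Nat.dvd_gcd hpa hpb
    rw [Nat.Coprime] at hab
    rw [hab] at h1
    exact pp.one_lt.ne' (Nat.dvd_one.mp h1)
  -- valuation of r
  have hvb : padicValNat p b = v := by
    rw [hv, Nat.factorization_def b pp]
  have hva : padicValNat p a = 0 := padicValNat.eq_zero_of_not_dvd hpa
  have hvr : padicValRat p r = -((a * v : ℕ) : ℤ) := by
    rw [hr_def, padicValRat.div (by positivity) (by positivity),
      padicValRat.pow _, padicValRat.pow _,
      padicValRat.of_nat, padicValRat.of_nat, hva, hvb]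
    push_cast
    ring
  have hvs : (m:ℤ) * padicValRat p s = -((a * v : ℕ) : ℤ) := by
    rw [← hvr, ← hsm, padicValRat.pow _]
  have hmdvd : m ∣ a * v := by
    have h1 : (m:ℤ) ∣ ((a * v : ℕ) : ℤ) := by
      refine (dvd_neg).mp ?_
      exact Dvd.intro _ hvs
    exact_mod_cast h1
  have hma : Nat.Coprime m a := (hab.coprime_dvd_right ⟨n, by rw [← hnm]; ring⟩).symm
  have hmv : m ∣ v := (Nat.Coprime.dvd_of_dvd_mul_left hma hmdvd)
  have hmlev : m ≤ v := Nat.le_of_dvd (by omega) hmv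
  -- 2^v ≤ b
  have h2v : 2 ^ v ≤ b := le_trans (Nat.pow_le_pow_left pp.two_le v) (Nat.ordProj_le p (by omega))
  -- final
  have hlogb : 0 < Real.log b := Real.log_pos (by exact_mod_cast hb2)
  have hlog2 : 0 < Real.log 2 := Real.log_pos one_lt_two
  refine ⟨hb2, ?_⟩
  rw [div_le_div_iff₀ hlogb hlog2]
  have hvlog : (v:ℝ) * Real.log 2 ≤ Real.log b := by
    calc (v:ℝ) * Real.log 2 = Real.log (2 ^ v) := by rw [Real.log_pow]
    _ ≤ Real.log b := Real.log_le_log (by positivity) (by exact_mod_cast h2v)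
  have hnb : (n:ℝ) * m = b := by exact_mod_cast hnm
  have hd' : (n:ℝ) ≤ d := by exact_mod_cast hnd
  have hmv' : (m:ℝ) ≤ v := by exact_mod_cast hmlev
  have s1 : (n:ℝ) * ((v:ℝ) * Real.log 2) ≤ (n:ℝ) * Real.log b :=
    mul_le_mul_of_nonneg_left hvlog (Nat.cast_nonneg n)
  have s1' : (n:ℝ) * (v:ℝ) * Real.log 2 ≤ (n:ℝ) * Real.log b := by
    rw [mul_assoc]; exact s1
  have c1 : (b:ℝ) * Real.log 2 = (n:ℝ) * (m:ℝ) * Real.log 2 := by rw [hnb]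
  have c2 : (n:ℝ) * (m:ℝ) * Real.log 2 ≤ (n:ℝ) * (v:ℝ) * Real.log 2 :=
    mul_le_mul_of_nonneg_right (mul_le_mul_of_nonneg_left hmv' (Nat.cast_nonneg n)) hlog2.le
  have c3 : (n:ℝ) * Real.log b ≤ (d:ℝ) * Real.log b :=
    mul_le_mul_of_nonneg_right hd' hlogb.le
  linarith [c1, c2, s1', c3]
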